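/- The map θ̃ : [0,∞)² → ℝ × [0,∞) defined by θ̃(z) = z²/|z| (where z² is complex squaring and |z| the Euclidean norm, with θ̃(0) = 0) is a homeomorphism from the closed quadrant [0,∞)² onto the closed upper half-plane ℝ × [0,∞). -/

import Mathlib

open Complex Filter Set

noncomputable def fTheta (z : ℂ) : ℂ := z ^ 2 / (‖z‖ : ℂ)

noncomputable def gTheta (w : ℂ) : ℂ :=
  (‖w‖ : ℂ) * Complex.exp ((Complex.arg w / 2 : ℝ) * Complex.I)

lemma norm_fTheta (z : ℂ) : ‖fTheta z‖ = ‖z‖ := by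
  rcases eq_or_ne z 0 with rfl | hz
  · simp [fTheta]
  · have h0 : ‖z‖ ≠ 0 := norm_ne_zero_iff.mpr hz
    rw [fTheta, norm_div, norm_pow, Complex.norm_real, Real.norm_of_nonneg (norm_nonneg z),
      sq, mul_div_assoc, div_self h0, mul_one]

lemma norm_gTheta (w : ℂ) : ‖gTheta w‖ = ‖w‖ := by
  rw [gTheta, norm_mul, Complex.norm_real, Real.norm_of_nonneg (norm_nonneg w),
    Complex.norm_exp_ofReal_mul_I, mul_one]

lemma fTheta_cont : Continuous fTheta := by
  rw [continuous_iff_continuousAt]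
  intro z
  rcases eq_or_ne z 0 with rfl | hz
  · have h0 : fTheta 0 = 0 := by simp [fTheta]
    rw [ContinuousAt, h0, tendsto_zero_iff_norm_tendsto_zero]
    simp only [norm_fTheta]
    simpa using (continuous_norm (E := ℂ)).tendsto 0
  · exact ((continuous_pow 2).continuousAt).div
      (Complex.continuous_ofReal.continuousAt.comp (continuous_norm.continuousAt))
      (by simpa [Complex.ofReal_ne_zero] using norm_ne_zero_iff.mpr hz)

lemma gTheta_contOn : ContinuousOn gTheta {z : ℂ | 0 ≤ z.im} := by
  intro w hw
  rcases eq_or_ne w 0 with rfl | hw0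
  · have h0 : gTheta 0 = 0 := by simp [gTheta]
    rw [ContinuousWithinAt, h0, tendsto_zero_iff_norm_tendsto_zero]
    simp only [norm_gTheta]
    exact ((continuous_norm (E := ℂ)).tendsto' 0 0 (by simp)).mono_left nhdsWithin_le_nhds
  · have harg : ContinuousWithinAt Complex.arg {z : ℂ | 0 ≤ z.im} w := by
      by_cases hs : w ∈ Complex.slitPlane
      · exact (Complex.continuousAt_arg hs).continuousWithinAt
      · rw [Complex.mem_slitPlane_iff] at hs
        push_neg at hs
        have him : w.im = 0 := hs.2
        have hre : w.re < 0 := by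
          rcases lt_or_eq_of_le hs.1 with h | h
          · exact h
          · exact absurd (by apply Complex.ext <;> simp [← h, him]) hw0
        exact Complex.continuousWithinAt_arg_of_re_neg_of_im_zero hre him
    refine ContinuousWithinAt.mul ?_ ?_
    · exact (Complex.continuous_ofReal.comp continuous_norm).continuousWithinAt
    · exact Complex.continuous_exp.continuousAt.comp_continuousWithinAt
        (((Complex.continuous_ofReal.continuousAt.comp_continuousWithinAt
          (harg.div_const 2))).mul continuousWithinAt_const)

lemma fTheta_eq (z : ℂ) (hz : z ≠ 0) :
    fTheta z = (‖z‖ : ℂ) * Complex.exp ((2 * Complex.arg z : ℝ) * Complex.I) := by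
  have h0 : (‖z‖ : ℂ) ≠ 0 := by
    simpa [Complex.ofReal_ne_zero] using (norm_ne_zero_iff.mpr hz)
  have hsq : z ^ 2 =
      (‖z‖ : ℂ) ^ 2 * Complex.exp ((2 * Complex.arg z : ℝ) * Complex.I) := by
    conv_lhs => rw [← Complex.norm_mul_exp_arg_mul_I z]
    rw [mul_pow, ← Complex.exp_nat_mul]
    congr 1
    push_cast
    ring
  rw [fTheta, hsq, sq, mul_assoc, mul_div_cancel_left₀ _ h0]

lemma arg_fTheta (z : ℂ) (hz : z ≠ 0) (hre : 0 ≤ z.re) (him : 0 ≤ z.im) :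
    Complex.arg (fTheta z) = 2 * Complex.arg z := by
  have h1 : 0 ≤ Complex.arg z := Complex.arg_nonneg_iff.mpr him
  have h2 : Complex.arg z ≤ Real.pi / 2 := Complex.arg_le_pi_div_two_iff.mpr (Or.inl hre)
  have hmem : 2 * Complex.arg z ∈ Set.Ioc (-Real.pi) Real.pi := by
    constructor
    · nlinarith [Real.pi_pos]
    · linarith
  rw [fTheta_eq z hz, Complex.exp_mul_I]
  exact Complex.arg_mul_cos_add_sin_mul_I (norm_pos_iff.mpr hz) hmem

lemma gTheta_fTheta (z : ℂ) (hre : 0 ≤ z.re) (him : 0 ≤ z.im) : gTheta (fTheta z) = z := by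
  rcases eq_or_ne z 0 with rfl | hz
  · simp [gTheta, fTheta]
  · rw [gTheta, norm_fTheta, arg_fTheta z hz hre him]
    rw [show (2 : ℝ) * Complex.arg z / 2 = Complex.arg z by ring]
    exact Complex.norm_mul_exp_arg_mul_I z

lemma fTheta_gTheta (w : ℂ) : fTheta (gTheta w) = w := by
  rcases eq_or_ne w 0 with rfl | hw
  · simp [gTheta, fTheta]
  · have hn : ‖w‖ ≠ 0 := norm_ne_zero_iff.mpr hw
    have h0 : (‖w‖ : ℂ) ≠ 0 := by simpa [Complex.ofReal_ne_zero] using hn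
    have hsq : gTheta w ^ 2 =
        (‖w‖ : ℂ) ^ 2 * Complex.exp ((Complex.arg w : ℝ) * Complex.I) := by
      rw [gTheta, mul_pow, ← Complex.exp_nat_mul]
      congr 1
      push_cast
      ring
    rw [fTheta, norm_gTheta, hsq, sq, mul_assoc, mul_div_cancel_left₀ _ h0]
    exact Complex.norm_mul_exp_arg_mul_I w

lemma fTheta_im (z : ℂ) (hre : 0 ≤ z.re) (him : 0 ≤ z.im) : 0 ≤ (fTheta z).im := by
  rw [fTheta]
  have : (z ^ 2 / (‖z‖ : ℂ)).im = (z ^ 2).im / ‖z‖ := by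
    rw [Complex.div_ofReal_im]
  rw [this]
  apply div_nonneg _ (norm_nonneg z)
  rw [sq, Complex.mul_im]
  nlinarith

lemma gTheta_mem (w : ℂ) (him : 0 ≤ w.im) : 0 ≤ (gTheta w).re ∧ 0 ≤ (gTheta w).im := by
  have h1 : 0 ≤ Complex.arg w := Complex.arg_nonneg_iff.mpr him
  have h2 : Complex.arg w ≤ Real.pi := Complex.arg_le_pi w
  have hc : 0 ≤ Real.cos (Complex.arg w / 2) := by
    apply Real.cos_nonneg_of_mem_Icc
    constructor
    · linarith [Real.pi_pos]
    · linarith [Complex.arg_le_pi w]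
  have hs : 0 ≤ Real.sin (Complex.arg w / 2) := by
    apply Real.sin_nonneg_of_nonneg_of_le_pi <;> linarith [Real.pi_pos]
  constructor
  · rw [gTheta, Complex.mul_re, Complex.ofReal_re, Complex.ofReal_im,
      Complex.exp_ofReal_mul_I_re]
    simp only [zero_mul, sub_zero]
    exact mul_nonneg (norm_nonneg w) hc
  · rw [gTheta, Complex.mul_im, Complex.ofReal_re, Complex.ofReal_im,
      Complex.exp_ofReal_mul_I_im]
    simp only [zero_mul, add_zero]
    exact mul_nonneg (norm_nonneg w) hs

/-- The map `θ̃ z = z² / |z|` (with `θ̃ 0 = 0`) is a homeomorphism from the closed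
quadrant `{z : ℂ | 0 ≤ Re z, 0 ≤ Im z}` onto the closed upper half-plane `{z | 0 ≤ Im z}`. -/
theorem stmt0 :
    ∃ e : {z : ℂ // 0 ≤ z.re ∧ 0 ≤ z.im} ≃ₜ {z : ℂ // 0 ≤ z.im},
      ∀ z : {z : ℂ // 0 ≤ z.re ∧ 0 ≤ z.im}, (e z : ℂ) = (z : ℂ) ^ 2 / (‖(z : ℂ)‖ : ℂ) := by
  refine ⟨{ toFun := fun z => ⟨fTheta z, fTheta_im z z.2.1 z.2.2⟩
            invFun := fun w => ⟨gTheta w, gTheta_mem w w.2⟩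
            left_inv := fun z => Subtype.ext (gTheta_fTheta z z.2.1 z.2.2)
            right_inv := fun w => Subtype.ext (fTheta_gTheta w)
            continuous_toFun := ((fTheta_cont.comp continuous_subtype_val).subtype_mk _)
            continuous_invFun := ?_ }, fun z => rfl⟩
  exact Continuous.subtype_mk
    (gTheta_contOn.comp_continuous continuous_subtype_val (fun w => w.2)) _
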